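/- Let P(x,y) be a polynomial of degree at most 3 in x and at most 3 in y (a tensor-product bicubic polynomial), a, b ∈ ℝ and h > 0. With P̄(x,y) = (1/h²)·∫_{x-h/2}^{x+h/2}∫_{y-h/2}^{y+h/2} P(s,t) dt ds the cell average and Δ^{2,x}, Δ^{2,y} the second central differences with step h in each variable, P(a,b) = P̄(a,b) - (1/24)·(Δ^{2,x}P̄(a,b) + Δ^{2,y}P̄(a,b)) + (1/576)·Δ^{2,x}Δ^{2,y}P̄(a,b). -/

import Mathlib

lemma dblint (c : Fin 4 → Fin 4 → ℝ) (x1 x2 y1 y2 : ℝ) :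
    (∫ s in x1..x2, ∫ t in y1..y2,
        ∑ i : Fin 4, ∑ j : Fin 4, c i j * s ^ (i : ℕ) * t ^ (j : ℕ)) =
    ∑ i : Fin 4, ∑ j : Fin 4, c i j * ((x2 ^ ((i : ℕ)+1) - x1 ^ ((i : ℕ)+1)) / ((i : ℕ)+1))
      * ((y2 ^ ((j : ℕ)+1) - y1 ^ ((j : ℕ)+1)) / ((j : ℕ)+1)) := by
  have inner : ∀ s : ℝ, (∫ t in y1..y2,
      ∑ i : Fin 4, ∑ j : Fin 4, c i j * s ^ (i : ℕ) * t ^ (j : ℕ)) =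
      ∑ i : Fin 4, ∑ j : Fin 4, c i j * s ^ (i : ℕ)
        * ((y2 ^ ((j : ℕ)+1) - y1 ^ ((j : ℕ)+1)) / ((j : ℕ)+1)) := by
    intro s
    rw [intervalIntegral.integral_finset_sum
      (f := fun (i : Fin 4) (t : ℝ) => ∑ j : Fin 4, c i j * s ^ (i : ℕ) * t ^ (j : ℕ))
      (fun i _ => Continuous.intervalIntegrable (by fun_prop) _ _)]
    refine Finset.sum_congr rfl fun i _ => ?_
    rw [intervalIntegral.integral_finset_sum
      (f := fun (j : Fin 4) (t : ℝ) => c i j * s ^ (i : ℕ) * t ^ (j : ℕ))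
      (fun j _ => Continuous.intervalIntegrable (by fun_prop) _ _)]
    refine Finset.sum_congr rfl fun j _ => ?_
    rw [intervalIntegral.integral_const_mul, integral_pow]
  simp only [inner]
  rw [intervalIntegral.integral_finset_sum
    (f := fun (i : Fin 4) (s : ℝ) => ∑ j : Fin 4, c i j * s ^ (i : ℕ)
        * ((y2 ^ ((j : ℕ)+1) - y1 ^ ((j : ℕ)+1)) / ((j : ℕ)+1)))
    (fun i _ => Continuous.intervalIntegrable (by fun_prop) _ _)]
  refine Finset.sum_congr rfl fun i _ => ?_
  rw [intervalIntegral.integral_finset_sum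
    (f := fun (j : Fin 4) (s : ℝ) => c i j * s ^ (i : ℕ)
        * ((y2 ^ ((j : ℕ)+1) - y1 ^ ((j : ℕ)+1)) / ((j : ℕ)+1)))
    (fun j _ => Continuous.intervalIntegrable (by fun_prop) _ _)]
  refine Finset.sum_congr rfl fun j _ => ?_
  rw [intervalIntegral.integral_mul_const, intervalIntegral.integral_const_mul, integral_pow]

lemma alg (h p q X Y cc : ℝ) (hh : h ≠ 0) (hp : p ≠ 0) (hq : q ≠ 0) :
    1 / h ^ 2 * (cc * (X / p) * (Y / q)) = cc * (X / (p * h)) * (Y / (q * h)) := by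
  field_simp

noncomputable def AA (h : ℝ) (n : ℕ) (x : ℝ) : ℝ :=
  ((x + h / 2) ^ (n + 1) - (x - h / 2) ^ (n + 1)) / (((n : ℝ) + 1) * h)

theorem stmt17 (c : Fin 4 → Fin 4 → ℝ) (P : ℝ → ℝ → ℝ)
    (hP : ∀ x y : ℝ, P x y = ∑ i : Fin 4, ∑ j : Fin 4, c i j * x ^ (i : ℕ) * y ^ (j : ℕ))
    (a b h : ℝ) (hh : 0 < h) (Pb : ℝ → ℝ → ℝ)
    (hPb : ∀ x y : ℝ, Pb x y = (1 / h ^ 2) *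
        ∫ s in (x - h / 2)..(x + h / 2), ∫ t in (y - h / 2)..(y + h / 2), P s t) :
    P a b = Pb a b
        - (1 / 24) * ((Pb (a - h) b - 2 * Pb a b + Pb (a + h) b)
            + (Pb a (b - h) - 2 * Pb a b + Pb a (b + h)))
        + (1 / 576) * ((Pb (a - h) (b - h) - 2 * Pb (a - h) b + Pb (a - h) (b + h))
            - 2 * (Pb a (b - h) - 2 * Pb a b + Pb a (b + h))
            + (Pb (a + h) (b - h) - 2 * Pb (a + h) b + Pb (a + h) (b + h))) := by
  have hne : h ≠ 0 := ne_of_gt hh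
  have key : ∀ x y : ℝ, Pb x y = (1 / h ^ 2) *
      ∑ i : Fin 4, ∑ j : Fin 4, c i j
        * (((x + h/2) ^ ((i : ℕ)+1) - (x - h/2) ^ ((i : ℕ)+1)) / ((i : ℕ)+1))
        * (((y + h/2) ^ ((j : ℕ)+1) - (y - h/2) ^ ((j : ℕ)+1)) / ((j : ℕ)+1)) := by
    intro x y
    rw [hPb, ← dblint c (x - h/2) (x + h/2) (y - h/2) (y + h/2)]
    congr 1
    apply intervalIntegral.integral_congr
    intro s hs
    apply intervalIntegral.integral_congr
    intro t ht
    exact hP s t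
  have key2 : ∀ x y : ℝ, Pb x y =
      ∑ i : Fin 4, ∑ j : Fin 4, c i j * AA h (i : ℕ) x * AA h (j : ℕ) y := by
    intro x y
    rw [key x y, Finset.mul_sum]
    refine Finset.sum_congr rfl fun i _ => ?_
    rw [Finset.mul_sum]
    refine Finset.sum_congr rfl fun j _ => ?_
    have hi : ((i : ℕ) : ℝ) + 1 ≠ 0 := by positivity
    have hj : ((j : ℕ) : ℝ) + 1 ≠ 0 := by positivity
    simp only [AA]
    exact alg h _ _ _ _ _ hne hi hj
  have hB : ∀ n : ℕ, n < 4 → ∀ x : ℝ,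
      AA h n x - (1/24) * (AA h n (x - h) - 2 * AA h n x + AA h n (x + h)) = x ^ n := by
    intro n hn x
    interval_cases n <;> (simp only [AA]; push_cast; field_simp; ring)
  have step1 : Pb a b
        - (1 / 24) * ((Pb (a - h) b - 2 * Pb a b + Pb (a + h) b)
            + (Pb a (b - h) - 2 * Pb a b + Pb a (b + h)))
        + (1 / 576) * ((Pb (a - h) (b - h) - 2 * Pb (a - h) b + Pb (a - h) (b + h))
            - 2 * (Pb a (b - h) - 2 * Pb a b + Pb a (b + h))
            + (Pb (a + h) (b - h) - 2 * Pb (a + h) b + Pb (a + h) (b + h)))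
      = ∑ i : Fin 4, ∑ j : Fin 4, c i j
          * (AA h (i : ℕ) a - (1/24) * (AA h (i : ℕ) (a - h) - 2 * AA h (i : ℕ) a + AA h (i : ℕ) (a + h)))
          * (AA h (j : ℕ) b - (1/24) * (AA h (j : ℕ) (b - h) - 2 * AA h (j : ℕ) b + AA h (j : ℕ) (b + h))) := by
    simp only [key2, Fin.sum_univ_four]
    ring
  rw [step1, hP]
  refine Finset.sum_congr rfl fun i _ => Finset.sum_congr rfl fun j _ => ?_
  rw [hB (i : ℕ) i.isLt a, hB (j : ℕ) j.isLt b]
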